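/- For any integer n ≥ 0 and integers b, b' with 1 ≤ b' ≤ b, one has Bound(n,b') ≥ Bound(n,b); that is, for fixed n, the function b ↦ Bound(n,b) is non-increasing in b. -/

import Mathlib

/-!
Formalization of guessing games (Wordle-style), following the paper's definitions:
guesses `G`, secrets `S ⊆ G`, responses `R` with `|R| > 1`, affirmative response
`r* ∈ R`, and an answering function `a` with `a(g,s) = r* ↔ g = s`.
-/

structure GuessingGame (α ρ : Type*) [DecidableEq α] [DecidableEq ρ] where
  G : Finset α
  S : Finset α
  R : Finset ρ
  rstar : ρ
  ans : α → α → ρ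
  S_subset_G : S ⊆ G
  one_lt_card_R : 1 < R.card
  rstar_mem : rstar ∈ R
  ans_mem : ∀ g ∈ G, ∀ s ∈ S, ans g s ∈ R
  ans_eq_rstar_iff : ∀ g ∈ G, ∀ s ∈ S, (ans g s = rstar ↔ g = s)

namespace GuessingGame

variable {α ρ : Type*} [DecidableEq α] [DecidableEq ρ] (gm : GuessingGame α ρ)

/-- The split `C_{g,r} = {c ∈ C : a(g,c) = r}`. -/
def split (C : Finset α) (g : α) (r : ρ) : Finset α :=
  C.filter fun c => gm.ans g c = r

/-- `nSplits(g,C) = |{r ∈ R : C_{g,r} ≠ ∅}|`. -/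
def nSplits (g : α) (C : Finset α) : ℕ :=
  (gm.R.filter fun r => (gm.split C g r).Nonempty).card

/-- The useful guesses `UG(C)`: for `|C| > 1` the guesses `g ∈ G` with
`nSplits(g,C) ≠ 1`; for `|C| ≤ 1`, `UG(C) = C`. -/
def UG (C : Finset α) : Finset α :=
  if 1 < C.card then gm.G.filter fun g => gm.nSplits g C ≠ 1 else C

/-- `MaxSplits(C) = max_{g ∈ G} nSplits(g,C)`. -/
def MaxSplits (C : Finset α) : ℕ :=
  gm.G.sup fun g => gm.nSplits g C

end GuessingGame

/-- `Bound(n,b)`: `Bound(0,b) = 0`, `Bound(n,1) = n(n+1)/2`, and for `n > 0`, `b > 1`,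
`Bound(n,b) = Σ_{i=1}^{k} i·b^{i-1} + (k+1)·(n - (b^k - 1)/(b-1))` where
`k = ⌊log_b (n(b-1)+1)⌋`. -/
def Bound (n b : ℕ) : ℕ :=
  if n = 0 then 0
  else if b = 1 then n * (n + 1) / 2
  else
    (∑ i ∈ Finset.range (Nat.log b (n * (b - 1) + 1)), (i + 1) * b ^ i) +
      (Nat.log b (n * (b - 1) + 1) + 1) *
        (n - (b ^ Nat.log b (n * (b - 1) + 1) - 1) / (b - 1))

namespace GuessingGame

variable {α ρ : Type*} [DecidableEq α] [DecidableEq ρ] (gm : GuessingGame α ρ)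

/-- Fuel-based implementation of the well-founded recursion defining `MinTotal`:
`MinTotal(∅) = 0` and for nonempty `C`,
`MinTotal(C) = min_{g ∈ UG(C)} (|C| + Σ_{r ∈ R \ {r*}} MinTotal(C_{g,r}))`.
Fuel `|C|` suffices since for a useful guess every split is a proper subset of `C`. -/
noncomputable def MinTotalAux : ℕ → Finset α → ℕ
  | 0, _ => 0
  | n + 1, C =>
    if C = ∅ then 0
    else
      sInf (↑((gm.UG C).image fun g =>
        C.card + ∑ r ∈ gm.R.erase gm.rstar, MinTotalAux n (gm.split C g r)) : Set ℕ)

/-- `MinTotal(C)`. -/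
noncomputable def MinTotal (C : Finset α) : ℕ :=
  gm.MinTotalAux C.card C

/-- `V*(g,C) = |C| + Σ_{r ∈ R \ {r*}} MinTotal(C_{g,r})`. -/
noncomputable def Vstar (g : α) (C : Finset α) : ℕ :=
  C.card + ∑ r ∈ gm.R.erase gm.rstar, gm.MinTotal (gm.split C g r)

/-- The lower bounds `LB_i` (`i ≥ 1`; `LB 0` is junk):
`LB_1(C) = Bound(|C|, MaxSplits(S))`, `LB_2(C) = Bound(|C|, MaxSplits(C))`, and for
`i ≥ 1`, `LB_{i+2}(∅) = 0` and `LB_{i+2}(C) = min_{g ∈ UG(C)} V_i(g,C)` for nonempty `C`,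
where `V_i(g,C) = |C| + Σ_{r ∈ R \ {r*}} LB_i(C_{g,r})`. -/
noncomputable def LB : ℕ → Finset α → ℕ
  | 0, _ => 0
  | 1, C => Bound C.card (gm.MaxSplits gm.S)
  | 2, C => Bound C.card (gm.MaxSplits C)
  | n + 3, C =>
    if C = ∅ then 0
    else
      sInf (↑((gm.UG C).image fun g =>
        C.card + ∑ r ∈ gm.R.erase gm.rstar, LB (n + 1) (gm.split C g r)) : Set ℕ)

/-- `V_i(g,C) = |C| + Σ_{r ∈ R \ {r*}} LB_i(C_{g,r})`. -/
noncomputable def V (i : ℕ) (g : α) (C : Finset α) : ℕ :=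
  C.card + ∑ r ∈ gm.R.erase gm.rstar, gm.LB i (gm.split C g r)

end GuessingGame

section Statements

open GuessingGame

variable {α ρ : Type*} [DecidableEq α] [DecidableEq ρ]

namespace BoundAux
def S (b i : ℕ) : ℕ := ∑ j ∈ Finset.range i, b ^ j
lemma S_succ (b i : ℕ) : S b (i+1) = S b i + b ^ i := Finset.sum_range_succ _ _
lemma S_mul (c i : ℕ) : c * S (c+1) i + 1 = (c+1) ^ i := by
  induction i with
  | zero => simp [S]
  | succ i ih =>
    rw [S_succ, Nat.mul_add, pow_succ]
    nlinarith [ih]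
lemma S_mul' (b i : ℕ) (hb : 2 ≤ b) : (b - 1) * S b i + 1 = b ^ i := by
  obtain ⟨c, rfl⟩ : ∃ c, b = c + 1 := ⟨b - 1, by omega⟩
  simpa using S_mul c i
lemma S_div (b i : ℕ) (hb : 2 ≤ b) : (b ^ i - 1) / (b - 1) = S b i := by
  have h := S_mul' b i hb
  have : b ^ i - 1 = (b - 1) * S b i := by omega
  rw [this, Nat.mul_div_cancel_left _ (by omega)]
lemma le_S (b n i : ℕ) (hb : 2 ≤ b) (h : n * (b - 1) + 1 ≤ b ^ i) : n ≤ S b i := by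
  have hm := S_mul' b i hb
  have h2 : (b - 1) * n ≤ (b - 1) * S b i := by rw [mul_comm (b-1) n] at *; omega
  exact Nat.le_of_mul_le_mul_left h2 (by omega)
lemma S_le (b n i : ℕ) (hb : 2 ≤ b) (h : b ^ i ≤ n * (b - 1) + 1) : S b i ≤ n := by
  have hm := S_mul' b i hb
  have h2 : (b - 1) * S b i ≤ (b - 1) * n := by rw [mul_comm (b-1) n] at *; omega
  exact Nat.le_of_mul_le_mul_left h2 (by omega)
lemma lt_S (b n i : ℕ) (hb : 2 ≤ b) (h : n * (b - 1) + 1 < b ^ i) : n < S b i := by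
  have hm := S_mul' b i hb
  have h2 : (b - 1) * n < (b - 1) * S b i := by rw [mul_comm (b-1) n] at *; omega
  exact Nat.lt_of_mul_lt_mul_left h2

lemma bound_succ (b n : ℕ) (hb : 2 ≤ b) :
    Bound (n + 1) b = Bound n b + Nat.clog b ((n + 1) * (b - 1) + 1) := by
  have hrw : ∀ m : ℕ, Bound m b =
      (∑ i ∈ Finset.range (Nat.log b (m * (b - 1) + 1)), (i + 1) * b ^ i)
        + (Nat.log b (m * (b - 1) + 1) + 1) * (m - S b (Nat.log b (m * (b - 1) + 1))) := by
    intro m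
    rw [Bound, if_neg (by omega : ¬ b = 1), S_div b _ hb]
    rcases Nat.eq_zero_or_pos m with rfl | hm
    · simp
    · rw [if_neg (by omega)]
  rw [hrw, hrw]
  set k := Nat.log b (n * (b - 1) + 1) with hk
  set k' := Nat.log b ((n + 1) * (b - 1) + 1) with hk'
  have hb1 : 1 < b := hb
  have h1 : b ^ k ≤ n * (b - 1) + 1 := Nat.pow_log_le_self b (by omega)
  have h2 : n * (b - 1) + 1 < b ^ (k + 1) := Nat.lt_pow_succ_log_self hb1 _
  have h3 : b ^ k' ≤ (n + 1) * (b - 1) + 1 := Nat.pow_log_le_self b (by omega)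
  have h4 : (n + 1) * (b - 1) + 1 < b ^ (k' + 1) := Nat.lt_pow_succ_log_self hb1 _
  have hmono : n * (b - 1) ≤ (n + 1) * (b - 1) := Nat.mul_le_mul_right _ (by omega)
  have hmono2 : n * (b - 1) + (b - 1) = (n + 1) * (b - 1) := by ring
  have hkk' : k ≤ k' := Nat.log_mono_right (by omega)
  have hk'k : k' ≤ k + 1 := by
    have hlt : b ^ k' < b ^ (k + 2) := by
      have e1 : (n + 1) * (b - 1) + 1 ≤ b * (n * (b - 1) + 1) := by
        have : n * (b - 1) ≤ b * (n * (b - 1)) := Nat.le_mul_of_pos_left _ (by omega)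
        rw [Nat.add_mul, Nat.mul_add]
        omega
      have e2 : b * (n * (b - 1) + 1) < b * b ^ (k + 1) := by
        have := Nat.mul_lt_mul_of_pos_left h2 (show 0 < b by omega)
        simpa using this
      calc b ^ k' ≤ (n + 1) * (b - 1) + 1 := h3
        _ < b * b ^ (k + 1) := lt_of_le_of_lt e1 e2
        _ = b ^ (k + 2) := by ring
    exact Nat.lt_succ_iff.mp (by exact (Nat.pow_lt_pow_iff_right hb1).mp hlt)
  rcases (by omega : k' = k ∨ k' = k + 1) with hE | hE
  · have hsk : S b k ≤ n := S_le b n k hb h1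
    have hclog : Nat.clog b ((n + 1) * (b - 1) + 1) = k + 1 := by
      apply le_antisymm
      · exact (Nat.clog_le_iff_le_pow hb1).mpr (le_of_lt (hE ▸ h4))
      · by_contra hc
        push_neg at hc
        have := (Nat.clog_le_iff_le_pow hb1).mp
          (show Nat.clog b ((n + 1) * (b - 1) + 1) ≤ k by omega)
        omega
    rw [hclog, hE]
    rw [(by omega : n + 1 - S b k = (n - S b k) + 1), Nat.mul_add]
    ring
  · have hS1 : S b (k + 1) ≤ n + 1 := S_le b (n+1) (k+1) hb (hE ▸ h3)
    have hS2 : n < S b (k + 1) := lt_S b n (k+1) hb h2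
    have hSeq : n + 1 = S b (k + 1) := by omega
    have hbk : 1 ≤ b ^ k := Nat.one_le_pow _ _ (by omega)
    have hnk : n - S b k = b ^ k - 1 := by have := S_succ b k; omega
    have hval : (n + 1) * (b - 1) + 1 = b ^ (k + 1) := by
      have hm := S_mul' b (k+1) hb
      rw [hSeq, mul_comm]
      omega
    have hclog : Nat.clog b ((n + 1) * (b - 1) + 1) = k + 1 := by
      apply le_antisymm
      · exact (Nat.clog_le_iff_le_pow hb1).mpr (le_of_eq hval)
      · by_contra hc
        push_neg at hc
        have h5 := (Nat.clog_le_iff_le_pow hb1).mp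
          (show Nat.clog b ((n + 1) * (b - 1) + 1) ≤ k by omega)
        have h6 : b ^ k < b ^ (k + 1) := Nat.pow_lt_pow_right hb1 (Nat.lt_succ_self k)
        omega
    rw [hE, hclog, ← hSeq, Nat.sub_self, Nat.mul_zero, Nat.add_zero,
      Finset.sum_range_succ, hnk]
    have h7 : (k + 1) * ((b ^ k - 1) + 1) = (k + 1) * (b ^ k - 1) + (k + 1) * 1 :=
      Nat.mul_add _ _ _
    rw [(by omega : (b ^ k - 1) + 1 = b ^ k)] at h7
    omega
end BoundAux

namespace BoundAux

def D (b m : ℕ) : ℕ := if b = 1 then m + 1 else Nat.clog b ((m + 1) * (b - 1) + 1)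

lemma bound_eq (b n : ℕ) (hb : 1 ≤ b) : Bound n b = ∑ m ∈ Finset.range n, D b m := by
  rcases (by omega : b = 1 ∨ 2 ≤ b) with rfl | hb2
  · have hD : (∑ m ∈ Finset.range n, D 1 m) = ∑ m ∈ Finset.range n, (m + 1) :=
      Finset.sum_congr rfl fun m _ => if_pos rfl
    rw [hD]
    have hsh : ∑ i ∈ Finset.range (n + 1), i = ∑ m ∈ Finset.range n, (m + 1) := by
      simpa using Finset.sum_range_succ' (fun i => i) n
    have hg : (∑ i ∈ Finset.range (n + 1), i) * 2 = (n + 1) * n := by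
      simpa using Finset.sum_range_id_mul_two (n + 1)
    rcases Nat.eq_zero_or_pos n with rfl | hn
    · simp [Bound]
    · rw [Bound, if_neg (by omega), if_pos rfl]
      apply Nat.div_eq_of_eq_mul_left (by omega)
      rw [Nat.mul_comm]
      omega
  · induction n with
    | zero => simp [Bound]
    | succ n ih =>
      rw [bound_succ b n hb2, ih, Finset.sum_range_succ, D, if_neg (by omega)]

lemma card_le_S (b i : ℕ) (hb : 2 ≤ b) : i ≤ S b i := by
  calc i = ∑ _j ∈ Finset.range i, 1 := by simp
    _ ≤ S b i := Finset.sum_le_sum fun j _ => Nat.one_le_pow _ _ (by omega)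

lemma D_anti (b b' m : ℕ) (hb' : 1 ≤ b') (hbb : b' ≤ b) : D b m ≤ D b' m := by
  rcases (by omega : b' = 1 ∨ 2 ≤ b') with rfl | hb2'
  · rcases (by omega : b = 1 ∨ 2 ≤ b) with rfl | hb2
    · exact le_refl _
    · rw [D, if_neg (by omega), D, if_pos rfl]
      apply (Nat.clog_le_iff_le_pow (by omega : 1 < b)).mpr
      have h1 : m + 1 ≤ S b (m + 1) := card_le_S b (m + 1) hb2
      have h2 : (b - 1) * (m + 1) ≤ (b - 1) * S b (m + 1) := Nat.mul_le_mul_left _ h1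
      have h3 := S_mul' b (m + 1) hb2
      rw [mul_comm (b - 1) (m + 1)] at h2
      omega
  · have hb2 : 2 ≤ b := by omega
    rw [D, if_neg (by omega), D, if_neg (by omega)]
    set j := Nat.clog b' ((m + 1) * (b' - 1) + 1) with hj
    have hx : (m + 1) * (b' - 1) + 1 ≤ b' ^ j := Nat.le_pow_clog (by omega) _
    have h1 : m + 1 ≤ S b' j := le_S b' (m + 1) j hb2' hx
    have h2 : S b' j ≤ S b j :=
      Finset.sum_le_sum fun i _ => Nat.pow_le_pow_left hbb i
    have h3 : (b - 1) * (m + 1) ≤ (b - 1) * S b j := Nat.mul_le_mul_left _ (by omega)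
    have h4 := S_mul' b j hb2
    apply (Nat.clog_le_iff_le_pow (by omega : 1 < b)).mpr
    rw [mul_comm (b - 1) (m + 1)] at h3
    omega

end BoundAux

theorem statement_6 (n b b' : ℕ) (hb' : 1 ≤ b') (hbb : b' ≤ b) :
    Bound n b ≤ Bound n b' := by
  rw [BoundAux.bound_eq b n (le_trans hb' hbb), BoundAux.bound_eq b' n hb']
  exact Finset.sum_le_sum fun m _ => BoundAux.D_anti b b' m hb' hbb

end Statements
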